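/- Let F be a positive semidefinite superoperator on Hermitian d×d matrices with Tr(F) = d² 𝓅 fixed, invertible, and having the identity matrix 1 as an eigenvector with eigenvalue d. Then Tr(F⁻¹) ≥ 1/d + (d²−1)²/(d²𝓅 − d), with equality if and only if F = α I + β |1⟩⟩⟨⟨1| with α = (d²𝓅 − d)/(d²−1) and β = 1 − α/d. -/

import Mathlib

open Matrix ComplexOrder

noncomputable section

abbrev Mat (d : ℕ) := Matrix (Fin d) (Fin d) ℂ

/-- The real vector space of Hermitian `d × d` complex matrices. -/
abbrev HermM (d : ℕ) : Submodule ℝ (Mat d) := selfAdjoint.submodule ℝ (Mat d)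

/-- The identity matrix as a Hermitian matrix. -/
def hermOne (d : ℕ) : HermM d := ⟨1, IsSelfAdjoint.one (Mat d)⟩

/-- The superoperator `|A⟩⟩⟨⟨B| : X ↦ tr(B X) • A` on Hermitian matrices. -/
def outerSO (d : ℕ) (A B : HermM d) : HermM d →ₗ[ℝ] HermM d :=
  (Complex.reLm ∘ₗ Matrix.traceLinearMap (Fin d) ℝ ℂ ∘ₗ
    LinearMap.mulLeft ℝ (B : Mat d) ∘ₗ (HermM d).subtype).smulRight A

namespace SuperopAux

variable {d : ℕ}

lemma herm_trace_mul_self_re (X : Mat d) (hX : IsSelfAdjoint X) :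
    (Matrix.trace (X * X)).re = ∑ i, ∑ j, Complex.normSq (X i j) := by
  have h : ∀ i j : Fin d, X j i = (starRingEnd ℂ) (X i j) := by
    intro i j
    conv_lhs => rw [← hX]
    rw [Matrix.star_apply, Complex.star_def]
  have : Matrix.trace (X * X) = ((∑ i, ∑ j, Complex.normSq (X i j) : ℝ) : ℂ) := by
    simp only [Matrix.trace, Matrix.diag, Matrix.mul_apply]
    push_cast
    refine Finset.sum_congr rfl fun i _ => Finset.sum_congr rfl fun j _ => ?_
    rw [h i j, Complex.mul_conj]
  rw [this, Complex.ofReal_re]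

/-- The Frobenius real inner product structure on Hermitian matrices. -/
def hermCore (d : ℕ) : InnerProductSpace.Core ℝ (HermM d) where
  inner X Y := (Matrix.trace ((X : Mat d) * (Y : Mat d))).re
  conj_inner_symm X Y := by
    simp only [starRingEnd_apply, star_trivial]
    rw [Matrix.trace_mul_comm]
  re_inner_nonneg X := by
    simpa [herm_trace_mul_self_re (X : Mat d) X.2] using
      Finset.sum_nonneg fun i _ => Finset.sum_nonneg fun j _ => Complex.normSq_nonneg _
  definite X hX := by
    have h0 : (Matrix.trace ((X : Mat d) * (X : Mat d))).re = 0 := hX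
    rw [herm_trace_mul_self_re (X : Mat d) X.2] at h0
    have hz : ∀ i ∈ Finset.univ, ∀ j ∈ (Finset.univ : Finset (Fin d)),
        Complex.normSq ((X : Mat d) i j) = 0 := by
      intro i _ j hj
      have := (Finset.sum_eq_zero_iff_of_nonneg (fun i _ =>
        Finset.sum_nonneg fun j _ => Complex.normSq_nonneg _)).mp h0 i (Finset.mem_univ i)
      exact (Finset.sum_eq_zero_iff_of_nonneg fun j _ => Complex.normSq_nonneg _).mp this j hj
    have : (X : Mat d) = 0 := by
      ext i j
      exact Complex.normSq_eq_zero.mp (hz i (Finset.mem_univ i) j (Finset.mem_univ j))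
    exact Subtype.ext this
  add_left X Y Z := by
    simp only [Submodule.coe_add, add_mul, Matrix.trace_add, Complex.add_re]
  smul_left X Y r := by
    simp only [SetLike.val_smul, smul_mul_assoc, Matrix.trace_smul, Complex.real_smul,
      Complex.re_ofReal_mul, starRingEnd_apply, star_trivial]

noncomputable instance (d : ℕ) : NormedAddCommGroup (HermM d) :=
  (hermCore d).toNormedAddCommGroup

noncomputable instance (d : ℕ) : InnerProductSpace ℝ (HermM d) :=
  InnerProductSpace.ofCore (hermCore d).toCore

lemma herm_inner_def (X Y : HermM d) :
    (inner ℝ X Y : ℝ) = (Matrix.trace ((X : Mat d) * (Y : Mat d))).re := rfl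

/-- Multiplication by `I` as an ℝ-linear map on matrices. -/
def mulI (d : ℕ) : Mat d →ₗ[ℝ] Mat d where
  toFun x := Complex.I • x
  map_add' x y := smul_add _ _ _
  map_smul' r x := smul_comm _ _ _

/-- `(X, Y) ↦ X + I • Y` as an ℝ-linear map. -/
def hermProd (d : ℕ) : (HermM d × HermM d) →ₗ[ℝ] Mat d :=
  ((HermM d).subtype).coprod ((mulI d) ∘ₗ (HermM d).subtype)

lemma hermProd_bijective (d : ℕ) : Function.Bijective (hermProd d) := by
  constructor
  · rw [← LinearMap.ker_eq_bot]
    rw [LinearMap.ker_eq_bot']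
    rintro ⟨X, Y⟩ h
    have h' : (X : Mat d) + Complex.I • (Y : Mat d) = 0 := h
    have hstar : (X : Mat d) - Complex.I • (Y : Mat d) = 0 := by
      have := congrArg star h'
      rw [star_add, star_smul, X.2.star_eq, Y.2.star_eq, star_zero, Complex.star_def,
        Complex.conj_I, neg_smul, ← sub_eq_add_neg] at this
      exact this
    have hX : (X : Mat d) = 0 := by
      have : (2 : ℂ) • (X : Mat d) = 0 := by
        rw [two_smul]
        calc (X : Mat d) + X = ((X : Mat d) + Complex.I • Y) + ((X : Mat d) - Complex.I • Y) := by
              abel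
          _ = 0 := by rw [h', hstar, add_zero]
      simpa using (smul_eq_zero.mp this).resolve_left (by norm_num)
    have hY : (Y : Mat d) = 0 := by
      have : Complex.I • (Y : Mat d) = 0 := by rw [← h', hX, zero_add]
      simpa using (smul_eq_zero.mp this).resolve_left Complex.I_ne_zero
    exact Prod.ext (Subtype.ext hX) (Subtype.ext hY)
  · intro z
    have hP : _root_.IsSelfAdjoint ((1/2 : ℂ) • (z + star z)) := by
      show star _ = _
      rw [star_smul, star_add, star_star, Complex.star_def]
      rw [show (starRingEnd ℂ) (1/2) = (1/2 : ℂ) by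
        rw [map_div₀, _root_.map_one, Complex.conj_ofNat]]
      rw [add_comm]
    have hQ : _root_.IsSelfAdjoint ((-(1/2) * Complex.I : ℂ) • (z - star z)) := by
      show star _ = _
      rw [star_smul, star_sub, star_star, Complex.star_def]
      rw [show (starRingEnd ℂ) (-(1/2) * Complex.I) = (1/2) * Complex.I by
        rw [_root_.map_mul, map_neg, map_div₀, _root_.map_one, Complex.conj_ofNat,
          Complex.conj_I]; ring]
      module
    refine ⟨(⟨_, hP⟩, ⟨_, hQ⟩), ?_⟩
    show (1/2 : ℂ) • (z + star z) + Complex.I • ((-(1/2) * Complex.I : ℂ) • (z - star z)) = z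
    rw [smul_smul]
    rw [show Complex.I * (-(1/2) * Complex.I) = (1/2 : ℂ) by
      rw [mul_comm, mul_assoc, Complex.I_mul_I]; ring]
    module

lemma finrank_hermM (d : ℕ) : Module.finrank ℝ (HermM d) = d ^ 2 := by
  have e : (HermM d × HermM d) ≃ₗ[ℝ] Mat d :=
    LinearEquiv.ofBijective (hermProd d) (hermProd_bijective d)
  have h1 : Module.finrank ℝ (HermM d × HermM d) = Module.finrank ℝ (Mat d) := e.finrank_eq
  have h2 : Module.finrank ℝ (Mat d) = d * d * 2 := by
    rw [Module.finrank_matrix]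
    simp [Complex.finrank_real_complex]
  rw [Module.finrank_prod, h2] at h1
  have : d ^ 2 = d * d := sq d
  omega

lemma trace_eq_sum_of_diag {E : Type*} [AddCommGroup E] [Module ℝ E] {n : ℕ}
    (b : Module.Basis (Fin n) ℝ E) (f : E →ₗ[ℝ] E) (μ : Fin n → ℝ)
    (h : ∀ i, f (b i) = μ i • b i) :
    LinearMap.trace ℝ E f = ∑ i, μ i := by
  classical
  rw [LinearMap.trace_eq_matrix_trace ℝ b f, Matrix.trace]
  refine Finset.sum_congr rfl fun i _ => ?_
  rw [Matrix.diag_apply, LinearMap.toMatrix_apply, h i, _root_.map_smul, Module.Basis.repr_self]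
  simp

lemma sum_inv_bound {ι : Type*} [DecidableEq ι] (s : Finset ι) (μ : ι → ℝ)
    (hpos : ∀ i ∈ s, 0 < μ i) (α : ℝ) (hα : 0 < α)
    (hsum : ∑ i ∈ s, μ i = (s.card : ℝ) * α) :
    (s.card : ℝ) / α ≤ ∑ i ∈ s, (μ i)⁻¹ ∧
      ((∑ i ∈ s, (μ i)⁻¹ = (s.card : ℝ) / α) ↔ ∀ i ∈ s, μ i = α) := by
  have hα' : α ≠ 0 := ne_of_gt hα
  have hid : ∑ i ∈ s, (μ i)⁻¹ - (s.card : ℝ) / α = ∑ i ∈ s, (α - μ i)^2 / (μ i * α^2) := by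
    have hterm : ∀ i ∈ s, (α - μ i)^2 / (μ i * α^2) = (μ i)⁻¹ - 2/α + μ i/α^2 := by
      intro i hi
      have := (hpos i hi).ne'
      field_simp
      ring
    rw [Finset.sum_congr rfl hterm]
    rw [Finset.sum_add_distrib, Finset.sum_sub_distrib, ← Finset.sum_div, ← Finset.sum_div,
      hsum, Finset.sum_const, nsmul_eq_mul]
    field_simp
    ring
  have hnn : ∀ i ∈ s, 0 ≤ (α - μ i)^2 / (μ i * α^2) := by
    intro i hi
    exact div_nonneg (sq_nonneg _) (le_of_lt (mul_pos (hpos i hi) (pow_pos hα 2)))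
  constructor
  · have := Finset.sum_nonneg hnn
    linarith [hid]
  constructor
  · intro h
    have h0 : ∑ i ∈ s, (α - μ i)^2 / (μ i * α^2) = 0 := by rw [← hid, h]; ring
    intro i hi
    have hz := (Finset.sum_eq_zero_iff_of_nonneg hnn).mp h0 i hi
    have hne : μ i * α^2 ≠ 0 := ne_of_gt (mul_pos (hpos i hi) (pow_pos hα 2))
    have hsq : (α - μ i)^2 = 0 := (div_eq_zero_iff.mp hz).resolve_right hne
    have := sq_eq_zero_iff.mp hsq
    linarith
  · intro h
    rw [Finset.sum_congr rfl (fun i hi => by rw [h i hi])]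
    rw [Finset.sum_const, nsmul_eq_mul]
    field_simp

lemma hermOne_coe (d : ℕ) : ((hermOne d : HermM d) : Mat d) = 1 := rfl

lemma outer_apply (d : ℕ) (X : HermM d) :
    outerSO d (hermOne d) (hermOne d) X = ((Matrix.trace (X : Mat d)).re) • hermOne d := by
  simp only [outerSO, LinearMap.smulRight_apply, LinearMap.comp_apply, Submodule.coe_subtype,
    LinearMap.mulLeft_apply, hermOne_coe, one_mul, Matrix.traceLinearMap_apply,
    Complex.reLm_coe]

end SuperopAux
set_option maxHeartbeats 1000000 in
/-- Let F be a positive definite (self-adjoint) superoperator on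
Hermitian d×d matrices with Tr(F) = d²𝓅, invertible with inverse G, and having
the identity matrix as eigenvector with eigenvalue d. Then
Tr(F⁻¹) ≥ 1/d + (d²−1)²/(d²𝓅 − d), with equality iff F = αI + β|1⟩⟩⟨⟨1| with
α = (d²𝓅 − d)/(d²−1) and β = 1 − α/d. -/
theorem superoperator_trace_inverse_bound (d : ℕ) (hd : 2 ≤ d)
    (F G : HermM d →ₗ[ℝ] HermM d) (𝓅 : ℝ)
    (hsym : ∀ X Y : HermM d,
      Matrix.trace (((F X : Mat d)) * (Y : Mat d)) =
      Matrix.trace ((X : Mat d) * ((F Y : Mat d))))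
    (hposdef : ∀ X : HermM d, X ≠ 0 →
      0 < (Matrix.trace (((F X : Mat d)) * (X : Mat d))).re)
    (hTrF : LinearMap.trace ℝ (HermM d) F = (d : ℝ) ^ 2 * 𝓅)
    (heig : F (hermOne d) = (d : ℝ) • hermOne d)
    (hGF : G ∘ₗ F = LinearMap.id) (hFG : F ∘ₗ G = LinearMap.id) :
    1 / (d : ℝ) + ((d : ℝ) ^ 2 - 1) ^ 2 / ((d : ℝ) ^ 2 * 𝓅 - d) ≤
      LinearMap.trace ℝ (HermM d) G ∧
    (LinearMap.trace ℝ (HermM d) G =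
        1 / (d : ℝ) + ((d : ℝ) ^ 2 - 1) ^ 2 / ((d : ℝ) ^ 2 * 𝓅 - d) ↔
      F = (((d : ℝ) ^ 2 * 𝓅 - d) / ((d : ℝ) ^ 2 - 1)) • LinearMap.id +
        (1 - (((d : ℝ) ^ 2 * 𝓅 - d) / ((d : ℝ) ^ 2 - 1)) / d) •
          outerSO d (hermOne d) (hermOne d)) := by
  classical
  have hd2 : (2:ℝ) ≤ (d:ℝ) := by exact_mod_cast hd
  have hd0 : (0:ℝ) < d := by linarith
  have hdne : (d:ℝ) ≠ 0 := ne_of_gt hd0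
  have hd21 : (0:ℝ) < (d:ℝ)^2 - 1 := by nlinarith
  have hsymm : F.IsSymmetric := fun X Y => congrArg Complex.re (hsym X Y)
  have hn : Module.finrank ℝ (HermM d) = d ^ 2 := SuperopAux.finrank_hermM d
  set b := hsymm.eigenvectorBasis hn with hb_def
  set μ := hsymm.eigenvalues hn with hμ_def
  have hFb : ∀ i, F (b i) = μ i • b i := fun i =>
    (hsymm.hasEigenvector_eigenvectorBasis hn i).apply_eq_smul
  have hb0 : ∀ i, b i ≠ 0 := fun i => (hsymm.hasEigenvector_eigenvectorBasis hn i).2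
  have hbnorm : ∀ i, (inner ℝ (b i) (b i) : ℝ) = 1 := by
    intro i
    rw [real_inner_self_eq_norm_sq, b.orthonormal.1 i, one_pow]
  have hborth : ∀ i k, i ≠ k → (inner ℝ (b i) (b k) : ℝ) = 0 := fun i k h => b.orthonormal.2 h
  have hμpos : ∀ i, 0 < μ i := by
    intro i
    have h1 := hposdef (b i) (hb0 i)
    rw [← SuperopAux.herm_inner_def] at h1
    rw [hFb i, real_inner_smul_left, hbnorm i, mul_one] at h1
    exact h1
  have hGb : ∀ i, G (b i) = (μ i)⁻¹ • b i := by
    intro i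
    have h1 : G (F (b i)) = b i := by
      have := LinearMap.ext_iff.mp hGF (b i)
      simpa using this
    rw [hFb i, _root_.map_smul] at h1
    have := congrArg (fun v => (μ i)⁻¹ • v) h1
    simpa [smul_smul, inv_mul_cancel₀ (hμpos i).ne'] using this
  have hTrFsum : ∑ i, μ i = (d:ℝ)^2 * 𝓅 := by
    rw [← hTrF]
    exact (SuperopAux.trace_eq_sum_of_diag b.toBasis F μ
      (fun i => by rw [OrthonormalBasis.coe_toBasis]; exact hFb i)).symm
  have hTrGsum : LinearMap.trace ℝ (HermM d) G = ∑ i, (μ i)⁻¹ :=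
    SuperopAux.trace_eq_sum_of_diag b.toBasis G _
      (fun i => by rw [OrthonormalBasis.coe_toBasis]; exact hGb i)
  have huu : (inner ℝ (hermOne d) (hermOne d) : ℝ) = d := by
    rw [SuperopAux.herm_inner_def, SuperopAux.hermOne_coe, Matrix.one_mul, Matrix.trace_one]
    simp
  set c : Fin (d^2) → ℝ := fun i => (inner ℝ (b i) (hermOne d) : ℝ) with hc_def
  have htri : ∀ i, (Matrix.trace ((b i : Mat d))).re = c i := by
    intro i
    have h1 : (inner ℝ (hermOne d) (b i) : ℝ) = (Matrix.trace ((b i : Mat d))).re := by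
      rw [SuperopAux.herm_inner_def, SuperopAux.hermOne_coe, Matrix.one_mul]
    rw [← h1, real_inner_comm]
  have hcμ : ∀ i, (μ i - d) * c i = 0 := by
    intro i
    have h1 : (inner ℝ (F (b i)) (hermOne d) : ℝ) = μ i * c i := by
      rw [hFb i, real_inner_smul_left]
    have h2 : (inner ℝ (F (b i)) (hermOne d) : ℝ) = d * c i := by
      rw [hsymm (b i) (hermOne d), heig, real_inner_smul_right]
    rw [sub_mul]
    linarith
  have hcd : ∀ k, c k ≠ 0 → μ k = d := by
    intro k hk
    rcases mul_eq_zero.mp (hcμ k) with h | h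
    · exact sub_eq_zero.mp h
    · exact absurd h hk
  have hurepr : ∑ i, c i • b i = hermOne d := b.sum_repr' (hermOne d)
  obtain ⟨j, hcj⟩ : ∃ j, c j ≠ 0 := by
    by_contra hco
    push_neg at hco
    have h0 : hermOne d = 0 := by
      rw [← hurepr]
      exact Finset.sum_eq_zero fun i _ => by rw [hco i, zero_smul]
    rw [h0, inner_zero_left] at huu
    linarith
  have hμj : μ j = d := hcd j hcj
  set s : Finset (Fin (d^2)) := Finset.univ.erase j with hs_def
  have hcards : s.card = d^2 - 1 := by
    rw [hs_def, Finset.card_erase_of_mem (Finset.mem_univ j), Finset.card_univ, Fintype.card_fin]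
  have hd2ge : 4 ≤ d^2 := by nlinarith
  have hcardR : (s.card : ℝ) = (d:ℝ)^2 - 1 := by
    rw [hcards]
    push_cast [Nat.cast_sub (by omega : 1 ≤ d^2)]
    ring
  have hsum_split : μ j + ∑ i ∈ s, μ i = ∑ i, μ i :=
    Finset.add_sum_erase _ μ (Finset.mem_univ j)
  have hsumS : ∑ i ∈ s, μ i = (d:ℝ)^2 * 𝓅 - d := by
    rw [hTrFsum] at hsum_split
    linarith [hμj]
  have hsne : s.Nonempty := Finset.card_pos.mp (by rw [hcards]; omega)
  have hS : (0:ℝ) < (d:ℝ)^2 * 𝓅 - d := by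
    rw [← hsumS]
    exact Finset.sum_pos (fun i _ => hμpos i) hsne
  set α : ℝ := ((d:ℝ)^2 * 𝓅 - (d:ℝ)) / ((d:ℝ)^2 - 1) with hα_def
  have hα : 0 < α := div_pos hS hd21
  have hsum_cα : ∑ i ∈ s, μ i = (s.card : ℝ) * α := by
    rw [hsumS, hcardR, hα_def]
    field_simp
  obtain ⟨hineq, hiff⟩ := SuperopAux.sum_inv_bound s μ (fun i _ => hμpos i) α hα hsum_cα
  have hval : ((d:ℝ)^2 - 1)^2 / ((d:ℝ)^2 * 𝓅 - (d:ℝ)) = (s.card : ℝ) / α := by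
    rw [hcardR, hα_def, div_div_eq_mul_div]
    ring
  have hinv_split : ∑ i, (μ i)⁻¹ = 1/(d:ℝ) + ∑ i ∈ s, (μ i)⁻¹ := by
    rw [← Finset.add_sum_erase _ (fun i => (μ i)⁻¹) (Finset.mem_univ j), hμj, inv_eq_one_div]
  constructor
  · rw [hTrGsum, hinv_split, hval]
    linarith [hineq]
  constructor
  · intro heq
    have hseq : ∑ i ∈ s, (μ i)⁻¹ = (s.card : ℝ) / α := by
      rw [hTrGsum, hinv_split, hval] at heq
      linarith
    have hall := hiff.mp hseq
    refine b.toBasis.ext fun i => ?_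
    rw [OrthonormalBasis.coe_toBasis]
    rw [LinearMap.add_apply, LinearMap.smul_apply, LinearMap.smul_apply, LinearMap.id_apply,
      SuperopAux.outer_apply, htri i, hFb i]
    by_cases hij' : i = j
    · subst hij'
      by_cases hαd : α = d
      · rw [hμj, hαd, show (1 - (d:ℝ)/d) = 0 by rw [div_self hdne, sub_self], zero_smul, add_zero]
      · have hcz : ∀ k, k ≠ i → c k = 0 := by
          intro k hk
          by_contra hck
          have h1 : μ k = d := hcd k hck
          have h2 : μ k = α := hall k (Finset.mem_erase.mpr ⟨hk, Finset.mem_univ k⟩)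
          exact hαd (by rw [← h2, h1])
        have huj : hermOne d = c i • b i := by
          rw [← hurepr]
          exact Finset.sum_eq_single i (fun k _ hk => by rw [hcz k hk, zero_smul])
            (fun h => absurd (Finset.mem_univ i) h)
        have hcj2 : c i * c i = d := by
          have h1 : (inner ℝ (hermOne d) (hermOne d) : ℝ) = c i * c i := by
            rw [huj, real_inner_smul_left, real_inner_smul_right, hbnorm i]
            ring
          linarith [huu]
        rw [hμj, huj, smul_smul, smul_smul, ← add_smul]
        congr 1
        have hrw : (1 - α/(d:ℝ)) * (d:ℝ) = (d:ℝ) - α := by field_simp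
        calc (d:ℝ) = α + (1 - α/(d:ℝ)) * (d:ℝ) := by rw [hrw]; ring
          _ = α + (1 - α/(d:ℝ)) * (c i * c i) := by rw [hcj2]
          _ = α + (1 - α/(d:ℝ)) * c i * c i := by ring
    · have hμi : μ i = α := hall i (Finset.mem_erase.mpr ⟨hij', Finset.mem_univ i⟩)
      by_cases hci : c i = 0
      · rw [hμi, hci, zero_smul, smul_zero, add_zero]
      · have hμid : μ i = d := hcd i hci
        have hαd : α = d := by rw [← hμi, hμid]
        rw [hμi, hαd, show (1 - (d:ℝ)/d) = 0 by rw [div_self hdne, sub_self], zero_smul, add_zero]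
  · intro hF
    have happ : ∀ i, α • b i + ((1 - α/(d:ℝ)) * c i) • hermOne d = μ i • b i := by
      intro i
      have h1 := hFb i
      rw [hF] at h1
      rw [LinearMap.add_apply, LinearMap.smul_apply, LinearMap.smul_apply, LinearMap.id_apply,
        SuperopAux.outer_apply, htri i, smul_smul] at h1
      exact h1
    have hall : ∀ i ∈ s, μ i = α := by
      intro i hi
      obtain ⟨hij', -⟩ := Finset.mem_erase.mp hi
      by_cases hci : c i = 0
      · have h1 := happ i
        rw [hci, mul_zero, zero_smul, add_zero] at h1
        have h2 : (μ i - α) • b i = 0 := by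
          rw [sub_smul, h1, sub_self]
        rcases smul_eq_zero.mp h2 with h | h
        · linarith [sub_eq_zero.mp h]
        · exact absurd h (hb0 i)
      · have hμid : μ i = d := hcd i hci
        by_cases hαd : α = d
        · rw [hμid, hαd]
        · exfalso
          have hco : ((1 - α/(d:ℝ)) * c j) ≠ 0 := by
            apply mul_ne_zero _ hcj
            intro h0
            apply hαd
            have : α / (d:ℝ) = 1 := by linarith
            field_simp at this
            linarith
          have hj1 := happ j
          rw [hμj] at hj1
          have hj2 : ((1 - α/(d:ℝ)) * c j) • hermOne d = ((d:ℝ) - α) • b j := by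
            have := congrArg (fun v => v - α • b j) hj1
            simpa [sub_smul, add_sub_cancel_left] using this
          have huj : hermOne d = (((1 - α/(d:ℝ)) * c j)⁻¹ * ((d:ℝ) - α)) • b j := by
            rw [mul_smul, ← hj2, smul_smul, inv_mul_cancel₀ hco, one_smul]
          apply hci
          rw [hc_def]
          show (inner ℝ (b i) (hermOne d) : ℝ) = 0
          rw [huj, real_inner_smul_right, hborth i j hij', mul_zero]
    rw [hTrGsum, hinv_split, hval]
    have hsc : ∑ i ∈ s, (μ i)⁻¹ = (s.card : ℝ) * α⁻¹ := by
      rw [Finset.sum_congr rfl (fun i hi => by rw [hall i hi]), Finset.sum_const, nsmul_eq_mul]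
    rw [hsc]
    ring
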